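/- Let M be an m×n T-shape matrix with index (i,j): there exist 1 ≤ i ≤ min(m,n), 0 ≤ j ≤ min(m,n)−i such that all entries except those in the first i rows and in columns i+1,…,i+j are zero, and the submatrix consisting of the first i+j columns of M is reduced. Then rank(M) = i + j. In particular, a T-shape matrix is of full rank min(m,n) if and only if i + j = min(m,n). -/

import Mathlib

/-- An `m × n` matrix `(d s t)` whose `(s,t)` entry is a univariate polynomial in
the variable `x_t` is *reduced* if for each diagonal position `s = t` (with
`s < min m n`), `d s s ≠ 0` and `deg(d s s) > deg(d k s)` for all `k > s`
(with `deg 0 = -∞`). -/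
def IsReducedMat {K : Type*} [Field K] {m n : ℕ}
    (d : Fin m → Fin n → Polynomial K) : Prop :=
  ∀ (s : Fin m) (t : Fin n), (s : ℕ) = (t : ℕ) →
    d s t ≠ 0 ∧ ∀ k : Fin m, (s : ℕ) < (k : ℕ) → (d k t).degree < (d s t).degree

section Aux

variable {K : Type*} [Field K]

open MvPolynomial

lemma coeff_aeval_X {σ : Type*} [DecidableEq σ] (u : σ) (g : Polynomial K) (m : σ →₀ ℕ) :
    MvPolynomial.coeff m (Polynomial.aeval (MvPolynomial.X u : MvPolynomial σ K) g) =
      if m = Finsupp.single u (m u) then g.coeff (m u) else 0 := by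
  rw [Polynomial.aeval_def, Polynomial.eval₂_eq_sum, Polynomial.sum_def]
  rw [MvPolynomial.coeff_sum]
  have halg : ∀ a : K, algebraMap K (MvPolynomial σ K) a = MvPolynomial.C a := fun a => rfl
  simp_rw [halg, MvPolynomial.coeff_C_mul, MvPolynomial.coeff_X_pow, mul_ite, mul_one, mul_zero]
  split_ifs with h
  · have hiff : ∀ k : ℕ, (Finsupp.single u k = m) ↔ k = m u := by
      intro k
      constructor
      · intro hk; rw [← hk, Finsupp.single_eq_same]
      · intro hk; rw [hk, ← h]
    simp_rw [hiff]
    rw [Finset.sum_ite_eq' g.support (m u) (fun k => g.coeff k)]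
    split_ifs with h2
    · rfl
    · exact (Polynomial.notMem_support_iff.mp h2).symm
  · apply Finset.sum_eq_zero
    intro k _
    rw [if_neg]
    intro hk2
    apply h
    rw [← hk2, Finsupp.single_eq_same]

lemma coeff_prod_aeval {σ : Type*} [DecidableEq σ] (g : σ → Polynomial K) (s : Finset σ)
    (m : σ →₀ ℕ) :
    MvPolynomial.coeff m (∏ u ∈ s, Polynomial.aeval (MvPolynomial.X u : MvPolynomial σ K) (g u))
      = if m.support ⊆ s then ∏ u ∈ s, (g u).coeff (m u) else 0 := by
  induction s using Finset.induction_on generalizing m with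
  | empty =>
    simp only [Finset.prod_empty, MvPolynomial.coeff_one]
    by_cases hm : m = 0
    · simp [hm]
    · rw [if_neg (fun h => hm h.symm), if_neg (fun h =>
        hm (Finsupp.support_eq_empty.mp (Finset.subset_empty.mp h)))]
  | @insert a s ha ih =>
    rw [Finset.prod_insert ha, MvPolynomial.coeff_mul]
    rw [Finset.sum_eq_single (Finsupp.single a (m a), m.erase a)]
    · rw [coeff_aeval_X, ih]
      simp only [Finsupp.single_eq_same, if_pos rfl]
      have hsupp : (m.erase a).support = m.support.erase a := Finsupp.support_erase
      by_cases hsub : m.support ⊆ insert a s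
      · have herase : (m.erase a).support ⊆ s := by
          rw [hsupp]
          intro x hx
          rcases Finset.mem_erase.mp hx with ⟨hxa, hxm⟩
          rcases Finset.mem_insert.mp (hsub hxm) with h | h
          · exact absurd h hxa
          · exact h
        rw [if_pos herase, if_pos hsub, Finset.prod_insert ha]
        congr 1
        apply Finset.prod_congr rfl
        intro u hu
        rw [Finsupp.erase_ne (fun h => ha (by rwa [h] at hu))]
      · have hnot : ¬ (m.erase a).support ⊆ s := by
          rw [hsupp]
          intro hcon
          apply hsub
          intro x hx
          by_cases hxa : x = a
          · exact Finset.mem_insert.mpr (Or.inl hxa)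
          · exact Finset.mem_insert.mpr (Or.inr (hcon (Finset.mem_erase.mpr ⟨hxa, hx⟩)))
        rw [if_neg hnot, if_neg hsub, mul_zero]
    · rintro ⟨b, c⟩ hbc hne
      rw [Finset.HasAntidiagonal.mem_antidiagonal] at hbc
      rw [coeff_aeval_X, ih]
      by_cases hb : b = Finsupp.single a (b a)
      · by_cases hc : c.support ⊆ s
        · exfalso
          apply hne
          have hca : c a = 0 := by
            by_contra hca
            exact ha (hc (Finsupp.mem_support_iff.mpr hca))
          have hba : b a = m a := by
            have := Finsupp.ext_iff.mp hbc a
            simp only [Finsupp.add_apply, hca, add_zero] at this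
            exact this
          have hbeq : b = Finsupp.single a (m a) := by rw [hb, hba]
          have hceq : c = m.erase a := by
            ext x
            by_cases hxa : x = a
            · subst hxa
              rw [hca, Finsupp.erase_same]
            · have := Finsupp.ext_iff.mp hbc x
              simp only [Finsupp.add_apply] at this
              rw [hbeq] at this
              rw [Finsupp.single_eq_of_ne' (fun h => hxa h.symm), zero_add] at this
              rw [this, Finsupp.erase_ne hxa]
          rw [hbeq, hceq]
        · rw [if_neg hc, mul_zero]
      · rw [if_neg hb, zero_mul]
    · intro hcon
      exfalso
      apply hcon
      rw [Finset.HasAntidiagonal.mem_antidiagonal]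
      exact Finsupp.single_add_erase a m

/-- The determinant of a reduced square matrix of univariate polynomials, with column `u`
evaluated at variable `X u`, is nonzero. -/
lemma det_aux {N : ℕ} (p : Fin N → Fin N → Polynomial K)
    (h0 : ∀ u, p u u ≠ 0)
    (hlt : ∀ t u : Fin N, (u : ℕ) < (t : ℕ) → (p t u).degree < (p u u).degree) :
    (Matrix.of fun t u : Fin N =>
      Polynomial.aeval (MvPolynomial.X u : MvPolynomial (Fin N) K) (p t u)).det ≠ 0 := by
  set μ : Fin N →₀ ℕ := Finsupp.equivFunOnFinite.symm (fun u => (p u u).natDegree) with hμdef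
  have hμ : ∀ u, μ u = (p u u).natDegree := fun u => rfl
  intro hdet
  have hc : MvPolynomial.coeff μ
      (Matrix.of fun t u : Fin N =>
        Polynomial.aeval (MvPolynomial.X u : MvPolynomial (Fin N) K) (p t u)).det = 0 := by
    rw [hdet]; simp
  apply absurd hc
  rw [Matrix.det_apply', MvPolynomial.coeff_sum]
  have key : ∀ σ : Equiv.Perm (Fin N),
      MvPolynomial.coeff μ (((Equiv.Perm.sign σ : ℤ) : MvPolynomial (Fin N) K) *
        ∏ u : Fin N, (Matrix.of fun t u : Fin N =>
          Polynomial.aeval (MvPolynomial.X u : MvPolynomial (Fin N) K) (p t u)) (σ u) u)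
      = ((Equiv.Perm.sign σ : ℤ) : K) * ∏ u : Fin N, (p (σ u) u).coeff (μ u) := by
    intro σ
    rw [show ((Equiv.Perm.sign σ : ℤ) : MvPolynomial (Fin N) K)
        = MvPolynomial.C ((Equiv.Perm.sign σ : ℤ) : K) from
      (map_intCast (MvPolynomial.C : K →+* MvPolynomial (Fin N) K)
        ((Equiv.Perm.sign σ : ℤ))).symm]
    rw [MvPolynomial.coeff_C_mul]
    congr 1
    have := coeff_prod_aeval (fun u : Fin N => p (σ u) u) Finset.univ μ
    simp only [Matrix.of_apply]
    rw [this, if_pos (Finset.subset_univ _)]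
  rw [Finset.sum_congr rfl fun σ _ => key σ]
  rw [Finset.sum_eq_single (1 : Equiv.Perm (Fin N))]
  · simp only [Equiv.Perm.sign_one, Units.val_one, Int.cast_one, one_mul, Equiv.Perm.one_apply]
    apply Finset.prod_ne_zero_iff.mpr
    intro u _
    rw [hμ u]
    exact Polynomial.leadingCoeff_ne_zero.mpr (h0 u)
  · intro σ _ hσ
    -- find the minimal moved point
    have hex : (Finset.univ.filter (fun u => σ u ≠ u)).Nonempty := by
      by_contra hcon
      apply hσ
      rw [Finset.not_nonempty_iff_eq_empty, Finset.filter_eq_empty_iff] at hcon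
      apply Equiv.ext
      intro u
      rw [Equiv.Perm.one_apply]
      exact not_not.mp (hcon (Finset.mem_univ u))
    obtain ⟨u₀, hu₀mem, hu₀min⟩ :=
      Finset.exists_min_image (Finset.univ.filter (fun u => σ u ≠ u)) id hex
    have hu₀ : σ u₀ ≠ u₀ := (Finset.mem_filter.mp hu₀mem).2
    have hσu₀ : σ (σ u₀) ≠ σ u₀ := fun h => hu₀ (σ.injective h)
    have hle : u₀ ≤ σ u₀ :=
      hu₀min (σ u₀) (Finset.mem_filter.mpr ⟨Finset.mem_univ _, hσu₀⟩)
    have hlt' : (u₀ : ℕ) < ((σ u₀ : Fin N) : ℕ) := by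
      rcases lt_or_eq_of_le hle with h | h
      · exact h
      · exact absurd h.symm hu₀
    have hz : (p (σ u₀) u₀).coeff (μ u₀) = 0 := by
      apply Polynomial.coeff_eq_zero_of_degree_lt
      rw [hμ u₀, ← Polynomial.degree_eq_natDegree (h0 u₀)]
      exact hlt _ _ hlt'
    rw [Finset.prod_eq_zero (Finset.mem_univ u₀) hz, mul_zero]
  · intro h; exact absurd (Finset.mem_univ _) h

/-- Renamed version: columns evaluated at an injective family of variables. -/
lemma det_reduced_ne_zero {N n : ℕ} (f : Fin N → Fin n) (hf : Function.Injective f)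
    (p : Fin N → Fin N → Polynomial K)
    (h0 : ∀ u, p u u ≠ 0)
    (hlt : ∀ t u : Fin N, (u : ℕ) < (t : ℕ) → (p t u).degree < (p u u).degree) :
    (Matrix.of fun t u : Fin N =>
      Polynomial.aeval (MvPolynomial.X (f u) : MvPolynomial (Fin n) K) (p t u)).det ≠ 0 := by
  have hmap : (Matrix.of fun t u : Fin N =>
      Polynomial.aeval (MvPolynomial.X (f u) : MvPolynomial (Fin n) K) (p t u))
      = (Matrix.of fun t u : Fin N =>
        Polynomial.aeval (MvPolynomial.X u : MvPolynomial (Fin N) K) (p t u)).map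
        (MvPolynomial.rename f) := by
    ext t u
    simp only [Matrix.map_apply, Matrix.of_apply]
    rw [← MvPolynomial.rename_X f u, Polynomial.aeval_algHom_apply]
  rw [hmap]
  intro h
  have h2 : MvPolynomial.rename f (Matrix.of fun t u : Fin N =>
      Polynomial.aeval (MvPolynomial.X u : MvPolynomial (Fin N) K) (p t u)).det = 0 := by
    rw [AlgHom.map_det, AlgHom.mapMatrix_apply]
    exact h
  exact det_aux p h0 hlt (MvPolynomial.rename_injective f hf (by rw [h2, map_zero]))

end Aux

/-- **Rank of a T-shape matrix.**  Let `M` be an `m × n` matrix in T-shape with index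
`(i,j)`: `1 ≤ i`, `i + j ≤ min m n`, all entries outside the first `i` rows and
outside columns `i+1,…,i+j` vanish, and the submatrix of the first `i+j` columns is
reduced.  Then `rank M = i + j` (over the field of rational functions); in
particular `M` has full rank `min m n` iff `i + j = min m n`. -/
theorem stmt7 (K : Type*) [Field K] (m n i j : ℕ) (hi : 1 ≤ i)
    (hij : i + j ≤ min m n)
    (d : Fin m → Fin n → Polynomial K)
    (hzero : ∀ (s : Fin m) (t : Fin n), i ≤ (s : ℕ) →
      ((t : ℕ) < i ∨ i + j ≤ (t : ℕ)) → d s t = 0)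
    (hred : IsReducedMat (fun (s : Fin m) (t : Fin (i + j)) =>
      d s (Fin.castLE (le_trans hij (min_le_right m n)) t))) :
    (Matrix.of fun (s : Fin m) (t : Fin n) =>
        algebraMap (MvPolynomial (Fin n) K) (FractionRing (MvPolynomial (Fin n) K))
          (Polynomial.aeval (MvPolynomial.X t) (d s t))).rank = i + j ∧
    ((Matrix.of fun (s : Fin m) (t : Fin n) =>
        algebraMap (MvPolynomial (Fin n) K) (FractionRing (MvPolynomial (Fin n) K))
          (Polynomial.aeval (MvPolynomial.X t) (d s t))).rank = min m n ↔
      i + j = min m n) := by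
  have hNn : i + j ≤ n := le_trans hij (min_le_right m n)
  have hNm : i + j ≤ m := le_trans hij (min_le_left m n)
  set F := FractionRing (MvPolynomial (Fin n) K) with hF
  set φ := algebraMap (MvPolynomial (Fin n) K) F with hφ
  set M : Matrix (Fin m) (Fin n) F :=
    Matrix.of fun (s : Fin m) (t : Fin n) =>
      φ (Polynomial.aeval (MvPolynomial.X t) (d s t)) with hM
  set col : Fin (i + j) → Fin n := Fin.castLE hNn with hcol
  set rowc : Fin (i + j) → Fin m := Fin.castLE hNm with hrowc
  have hrank : M.rank = i + j := by
    apply le_antisymm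
    · -- upper bound via factorization M = B * C
      set B : Matrix (Fin m) (Fin (i + j)) F :=
        Matrix.of fun s t => if (t : ℕ) < i then (if (s : ℕ) = (t : ℕ) then 1 else 0)
          else (if i ≤ (s : ℕ) then M s (col t) else 0) with hB
      set C : Matrix (Fin (i + j)) (Fin n) F :=
        Matrix.of fun t u => if (t : ℕ) < i then M (rowc t) u
          else (if u = col t then (1 : F) else 0) with hC
      have hfac : M = B * C := by
        ext s u
        rw [Matrix.mul_apply]
        by_cases hs : (s : ℕ) < i
        · have hsN : (s : ℕ) < i + j := lt_of_lt_of_le hs (Nat.le_add_right i j)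
          rw [Finset.sum_eq_single (⟨(s : ℕ), hsN⟩ : Fin (i + j))]
          · have h1 : rowc (⟨(s : ℕ), hsN⟩ : Fin (i + j)) = s := Fin.ext rfl
            simp [hB, hC, hs, h1]
          · intro t _ ht
            simp only [hB, hC, Matrix.of_apply]
            by_cases hti : (t : ℕ) < i
            · rw [if_pos hti, if_neg (show ¬(s : ℕ) = (t : ℕ) from
                fun hst => ht (Fin.ext hst.symm)), zero_mul]
            · rw [if_neg hti, if_neg (show ¬ i ≤ (s : ℕ) by omega), zero_mul]
          · intro h; exact absurd (Finset.mem_univ _) h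
        · push_neg at hs
          by_cases hu : i ≤ (u : ℕ) ∧ (u : ℕ) < i + j
          · rw [Finset.sum_eq_single (⟨(u : ℕ), hu.2⟩ : Fin (i + j))]
            · have h1 : col (⟨(u : ℕ), hu.2⟩ : Fin (i + j)) = u := Fin.ext rfl
              have h2 : ¬ (u : ℕ) < i := by omega
              simp [hB, hC, h1, h2, hs]
            · intro t _ ht
              simp only [hB, hC, Matrix.of_apply]
              by_cases hti : (t : ℕ) < i
              · rw [if_pos hti, if_neg (show ¬(s : ℕ) = (t : ℕ) by omega), zero_mul]
              · rw [if_neg hti, if_neg hti, if_neg (show ¬ u = col t from fun hut => by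
                  apply ht
                  apply Fin.ext
                  have : (u : ℕ) = (t : ℕ) := by rw [hut]; rfl
                  exact this.symm), mul_zero]
            · intro h; exact absurd (Finset.mem_univ _) h
          · have hM0 : M s u = 0 := by
              simp only [hM, Matrix.of_apply]
              rw [hzero s u hs (by omega), map_zero, map_zero]
            rw [hM0]
            symm
            apply Finset.sum_eq_zero
            intro t _
            simp only [hB, hC, Matrix.of_apply]
            by_cases hti : (t : ℕ) < i
            · rw [if_pos hti, if_neg (show ¬(s : ℕ) = (t : ℕ) by omega), zero_mul]
            · rw [if_neg hti, if_neg hti, if_neg (show ¬ u = col t from fun hut => by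
                have h1 : (u : ℕ) = (t : ℕ) := by rw [hut]; rfl
                have h2 := t.isLt
                omega), mul_zero]
      calc M.rank ≤ B.rank := by rw [hfac]; exact Matrix.rank_mul_le_left B C
        _ ≤ Fintype.card (Fin (i + j)) := Matrix.rank_le_card_width B
        _ = i + j := Fintype.card_fin _
    · -- lower bound via the reduced square submatrix
      set S : Matrix (Fin (i + j)) (Fin (i + j)) F := M.submatrix rowc col with hS
      have hdet : S.det ≠ 0 := by
        have hSmap : S = (Matrix.of fun t u : Fin (i + j) =>
            Polynomial.aeval (MvPolynomial.X (col u) : MvPolynomial (Fin n) K)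
              (d (rowc t) (col u))).map φ := by
          ext t u
          rfl
        rw [hSmap]
        intro h
        rw [show (Matrix.of fun t u : Fin (i + j) =>
            Polynomial.aeval (MvPolynomial.X (col u) : MvPolynomial (Fin n) K)
              (d (rowc t) (col u))).map φ
          = φ.mapMatrix (Matrix.of fun t u : Fin (i + j) =>
            Polynomial.aeval (MvPolynomial.X (col u) : MvPolynomial (Fin n) K)
              (d (rowc t) (col u))) from rfl, ← RingHom.map_det] at h
        have hφinj : Function.Injective φ := IsFractionRing.injective _ _
        have h0 : (Matrix.of fun t u : Fin (i + j) =>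
            Polynomial.aeval (MvPolynomial.X (col u) : MvPolynomial (Fin n) K)
              (d (rowc t) (col u))).det = 0 := by
          apply hφinj
          rw [h, map_zero]
        refine det_reduced_ne_zero col (Fin.castLE_injective hNn)
          (fun t u => d (rowc t) (col u)) ?_ ?_ h0
        · intro u
          exact (hred (rowc u) u rfl).1
        · intro t u htu
          exact (hred (rowc u) u rfl).2 (rowc t) htu
      have hSrank : S.rank = i + j := by
        rw [Matrix.rank_of_isUnit S ((Matrix.isUnit_iff_isUnit_det S).mpr
          (isUnit_iff_ne_zero.mpr hdet))]
        exact Fintype.card_fin _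
      have hfac2 : S = ((1 : Matrix (Fin m) (Fin m) F).submatrix rowc (Equiv.refl (Fin m))) *
          (M * (1 : Matrix (Fin n) (Fin n) F).submatrix (Equiv.refl (Fin n)) col) := by
        rw [Matrix.mul_submatrix_one (Equiv.refl (Fin n)) col M]
        rw [Matrix.one_submatrix_mul rowc (Equiv.refl (Fin m))]
        simp [hS, Matrix.submatrix_submatrix]
      calc (i + j : ℕ) = S.rank := hSrank.symm
        _ ≤ (M * (1 : Matrix (Fin n) (Fin n) F).submatrix (Equiv.refl (Fin n)) col).rank := by
            rw [hfac2]; exact Matrix.rank_mul_le_right _ _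
        _ ≤ M.rank := Matrix.rank_mul_le_left _ _
  refine ⟨hrank, ?_⟩
  rw [hrank]
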